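/- arXiv:1405.3469 — 4 statements merged into one kernel-verified Lean document; each statement's English description precedes it below -/
import Mathlib

section
/- Let v : ℝ³ → ℝ³ be a C² vector field with div v = 0, and suppose there is a C² function P : ℝ³ → ℝ with v × curl v = ∇P on ℝ³. Then the vector fields v and curl v commute: (curl v·∇)v − (v·∇)(curl v) = 0 at every point of ℝ³, i.e. the Lie bracket [curl v, v] vanishes. -/
open scoped BigOperators

/-- Partial derivative `∂ⱼ f` of a scalar function on `ℝ³`. -/
noncomputable def pd (j : Fin 3) (f : (Fin 3 → ℝ) → ℝ) (x : Fin 3 → ℝ) : ℝ :=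
  fderiv ℝ f x (Pi.single j 1)

/-- Cross product on `ℝ³`. -/
def cross (a b : Fin 3 → ℝ) : Fin 3 → ℝ :=
  ![a 1 * b 2 - a 2 * b 1, a 2 * b 0 - a 0 * b 2, a 0 * b 1 - a 1 * b 0]

/-- Curl of a vector field on `ℝ³`. -/
noncomputable def curl (v : (Fin 3 → ℝ) → Fin 3 → ℝ) (x : Fin 3 → ℝ) : Fin 3 → ℝ :=
  ![pd 1 (fun y => v y 2) x - pd 2 (fun y => v y 1) x,
    pd 2 (fun y => v y 0) x - pd 0 (fun y => v y 2) x,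
    pd 0 (fun y => v y 1) x - pd 1 (fun y => v y 0) x]

lemma contDiff_pd {f : (Fin 3 → ℝ) → ℝ} (hf : ContDiff ℝ 2 f) (j : Fin 3) :
    ContDiff ℝ 1 (pd j f) := by
  have h1 : ContDiff ℝ 1 (fderiv ℝ f) := hf.fderiv_right (by norm_num)
  exact h1.clm_apply contDiff_const

lemma pd_symm {f : (Fin 3 → ℝ) → ℝ} (hf : ContDiff ℝ 2 f) (i j : Fin 3) (x : Fin 3 → ℝ) :
    pd i (pd j f) x = pd j (pd i f) x := by
  have h1 : ContDiff ℝ 1 (fderiv ℝ f) := hf.fderiv_right (by norm_num)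
  have hdx : DifferentiableAt ℝ (fderiv ℝ f) x :=
    (h1.differentiable one_ne_zero).differentiableAt
  have hval : ∀ (a : Fin 3),
      fderiv ℝ (fun y => fderiv ℝ f y (Pi.single a 1)) x
        = (fderiv ℝ (fderiv ℝ f) x).flip (Pi.single a 1) := by
    intro a
    have := fderiv_clm_apply (c := fderiv ℝ f) (u := fun _ => (Pi.single a 1 : Fin 3 → ℝ))
      hdx (differentiableAt_const _)
    simpa using this
  have hsymm : IsSymmSndFDerivAt ℝ f x :=
    hf.contDiffAt.isSymmSndFDerivAt (by norm_num)
  show fderiv ℝ (pd j f) x (Pi.single i 1) = fderiv ℝ (pd i f) x (Pi.single j 1)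
  rw [show pd j f = fun y => fderiv ℝ f y (Pi.single j 1) from rfl,
      show pd i f = fun y => fderiv ℝ f y (Pi.single i 1) from rfl, hval, hval]
  exact hsymm _ _

lemma pd_sub {f g : (Fin 3 → ℝ) → ℝ} {x : Fin 3 → ℝ} (hf : DifferentiableAt ℝ f x)
    (hg : DifferentiableAt ℝ g x) (j : Fin 3) :
    pd j (fun y => f y - g y) x = pd j f x - pd j g x := by
  unfold pd
  rw [fderiv_fun_sub hf hg]
  rfl

lemma pd_mul {f g : (Fin 3 → ℝ) → ℝ} {x : Fin 3 → ℝ} (hf : DifferentiableAt ℝ f x)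
    (hg : DifferentiableAt ℝ g x) (j : Fin 3) :
    pd j (fun y => f y * g y) x = pd j f x * g x + f x * pd j g x := by
  unfold pd
  rw [fderiv_fun_mul hf hg]
  simp
  ring

/-- if `v` is a `C²` divergence-free field and `v × curl v = ∇P` for some `C²`
function `P`, then the Lie bracket `[curl v, v] = (curl v·∇)v − (v·∇)(curl v)` vanishes. -/
theorem stmt2 (v : (Fin 3 → ℝ) → Fin 3 → ℝ) (hv : ContDiff ℝ 2 v)
    (hdiv : ∀ x, (∑ i, pd i (fun y => v y i) x) = 0)
    (P : (Fin 3 → ℝ) → ℝ) (hPsmooth : ContDiff ℝ 2 P)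
    (hbernoulli : ∀ x i, cross (v x) (curl v x) i = pd i P x) :
    ∀ x i, (∑ j, curl v x j * pd j (fun y => v y i) x)
      - (∑ j, v x j * pd j (fun y => curl v y i) x) = 0 := by
  intro x i
  have hvC : ∀ k : Fin 3, ContDiff ℝ 2 (fun y => v y k) := fun k => contDiff_pi.mp hv k
  have hvD : ∀ k : Fin 3, DifferentiableAt ℝ (fun y => v y k) x :=
    fun k => ((hvC k).differentiable (by norm_num)).differentiableAt
  have hpD : ∀ m k : Fin 3, DifferentiableAt ℝ (pd m (fun y => v y k)) x :=
    fun m k => ((contDiff_pd (hvC k) m).differentiable one_ne_zero).differentiableAt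
  have hc0 : (fun y => curl v y 0) =
      fun y => pd 1 (fun z => v z 2) y - pd 2 (fun z => v z 1) y := by
    funext y; simp [curl]
  have hc1 : (fun y => curl v y 1) =
      fun y => pd 2 (fun z => v z 0) y - pd 0 (fun z => v z 2) y := by
    funext y; simp [curl]
  have hc2 : (fun y => curl v y 2) =
      fun y => pd 0 (fun z => v z 1) y - pd 1 (fun z => v z 0) y := by
    funext y; simp [curl]
  have hcD : ∀ k : Fin 3, DifferentiableAt ℝ (fun y => curl v y k) x := by
    intro k
    fin_cases k
    · show DifferentiableAt ℝ (fun y => curl v y 0) x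
      rw [hc0]; exact (hpD 1 2).sub (hpD 2 1)
    · show DifferentiableAt ℝ (fun y => curl v y 1) x
      rw [hc1]; exact (hpD 2 0).sub (hpD 0 2)
    · show DifferentiableAt ℝ (fun y => curl v y 2) x
      rw [hc2]; exact (hpD 0 1).sub (hpD 1 0)
  have hdiv' : pd 0 (fun y => v y 0) x + pd 1 (fun y => v y 1) x
      + pd 2 (fun y => v y 2) x = 0 := by
    have := hdiv x; rwa [Fin.sum_univ_three] at this
  have hsym : ∀ k m j : Fin 3,
      pd j (pd m (fun y => v y k)) x = pd m (pd j (fun y => v y k)) x :=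
    fun k m j => pd_symm (hvC k) j m x
  have hFeq : ∀ a b : Fin 3, pd a (fun y => cross (v y) (curl v y) b) x
      = pd b (fun y => cross (v y) (curl v y) a) x := by
    intro a b
    rw [show (fun y => cross (v y) (curl v y) b) = pd b P from funext fun y => hbernoulli y b,
        show (fun y => cross (v y) (curl v y) a) = pd a P from funext fun y => hbernoulli y a]
    exact pd_symm hPsmooth a b x
  have hpc0 : ∀ j, pd j (fun y => curl v y 0) x
      = pd j (pd 1 (fun z => v z 2)) x - pd j (pd 2 (fun z => v z 1)) x := fun j => by
    rw [hc0, pd_sub (hpD 1 2) (hpD 2 1)]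
  have hpc1 : ∀ j, pd j (fun y => curl v y 1) x
      = pd j (pd 2 (fun z => v z 0)) x - pd j (pd 0 (fun z => v z 2)) x := fun j => by
    rw [hc1, pd_sub (hpD 2 0) (hpD 0 2)]
  have hpc2 : ∀ j, pd j (fun y => curl v y 2) x
      = pd j (pd 0 (fun z => v z 1)) x - pd j (pd 1 (fun z => v z 0)) x := fun j => by
    rw [hc2, pd_sub (hpD 0 1) (hpD 1 0)]
  have hx0 : (fun y => cross (v y) (curl v y) 0)
      = fun y => v y 1 * curl v y 2 - v y 2 * curl v y 1 := by funext y; simp [cross]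
  have hx1 : (fun y => cross (v y) (curl v y) 1)
      = fun y => v y 2 * curl v y 0 - v y 0 * curl v y 2 := by funext y; simp [cross]
  have hx2 : (fun y => cross (v y) (curl v y) 2)
      = fun y => v y 0 * curl v y 1 - v y 1 * curl v y 0 := by funext y; simp [cross]
  have hpF0 : ∀ j, pd j (fun y => cross (v y) (curl v y) 0) x
      = (pd j (fun y => v y 1) x * curl v x 2 + v x 1 * pd j (fun y => curl v y 2) x)
        - (pd j (fun y => v y 2) x * curl v x 1 + v x 2 * pd j (fun y => curl v y 1) x) :=
    fun j => by
      rw [hx0, pd_sub ((hvD 1).fun_mul (hcD 2)) ((hvD 2).fun_mul (hcD 1)),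
        pd_mul (hvD 1) (hcD 2), pd_mul (hvD 2) (hcD 1)]
  have hpF1 : ∀ j, pd j (fun y => cross (v y) (curl v y) 1) x
      = (pd j (fun y => v y 2) x * curl v x 0 + v x 2 * pd j (fun y => curl v y 0) x)
        - (pd j (fun y => v y 0) x * curl v x 2 + v x 0 * pd j (fun y => curl v y 2) x) :=
    fun j => by
      rw [hx1, pd_sub ((hvD 2).fun_mul (hcD 0)) ((hvD 0).fun_mul (hcD 2)),
        pd_mul (hvD 2) (hcD 0), pd_mul (hvD 0) (hcD 2)]
  have hpF2 : ∀ j, pd j (fun y => cross (v y) (curl v y) 2) x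
      = (pd j (fun y => v y 0) x * curl v x 1 + v x 0 * pd j (fun y => curl v y 1) x)
        - (pd j (fun y => v y 1) x * curl v x 0 + v x 1 * pd j (fun y => curl v y 0) x) :=
    fun j => by
      rw [hx2, pd_sub ((hvD 0).fun_mul (hcD 1)) ((hvD 1).fun_mul (hcD 0)),
        pd_mul (hvD 0) (hcD 1), pd_mul (hvD 1) (hcD 0)]
  have hw0 : curl v x 0 = pd 1 (fun z => v z 2) x - pd 2 (fun z => v z 1) x := by simp [curl]
  have hw1 : curl v x 1 = pd 2 (fun z => v z 0) x - pd 0 (fun z => v z 2) x := by simp [curl]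
  have hw2 : curl v x 2 = pd 0 (fun z => v z 1) x - pd 1 (fun z => v z 0) x := by simp [curl]
  fin_cases i
  · show (∑ j, curl v x j * pd j (fun y => v y 0) x)
      - (∑ j, v x j * pd j (fun y => curl v y 0) x) = 0
    simp only [Fin.sum_univ_three]
    have hE := hFeq 1 2
    simp only [hpF1, hpF2] at hE
    simp only [hw0, hw1, hw2, hpc0, hpc1, hpc2] at hE ⊢
    linear_combination hE
      + (pd 1 (fun z => v z 2) x - pd 2 (fun z => v z 1) x) * hdiv'
      - v x 0 * (hsym 2 1 0) - v x 0 * (hsym 0 2 1) - v x 0 * (hsym 1 0 2)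
  · show (∑ j, curl v x j * pd j (fun y => v y 1) x)
      - (∑ j, v x j * pd j (fun y => curl v y 1) x) = 0
    simp only [Fin.sum_univ_three]
    have hE := hFeq 2 0
    simp only [hpF2, hpF0] at hE
    simp only [hw0, hw1, hw2, hpc0, hpc1, hpc2] at hE ⊢
    linear_combination hE
      + (pd 2 (fun z => v z 0) x - pd 0 (fun z => v z 2) x) * hdiv'
      - v x 1 * (hsym 2 1 0) - v x 1 * (hsym 0 2 1) - v x 1 * (hsym 1 0 2)
  · show (∑ j, curl v x j * pd j (fun y => v y 2) x)
      - (∑ j, v x j * pd j (fun y => curl v y 2) x) = 0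
    simp only [Fin.sum_univ_three]
    have hE := hFeq 0 1
    simp only [hpF0, hpF1] at hE
    simp only [hw0, hw1, hw2, hpc0, hpc1, hpc2] at hE ⊢
    linear_combination hE
      + (pd 0 (fun z => v z 1) x - pd 1 (fun z => v z 0) x) * hdiv'
      - v x 2 * (hsym 2 1 0) - v x 2 * (hsym 0 2 1) - v x 2 * (hsym 1 0 2)
end

section
/- Critical points of a σ₂-critical field are critical points of the induced Bernoulli function (flat-target instance): let φ = (φ₁,φ₂) : ℝ³ → ℝ² be a C² map and P̄ : ℝ² → ℝ a C¹ function such that τ_{σ₂}(φ)ₐ(x) = (∂ₐP̄)(φ(x)) for a = 1,2 and all x ∈ ℝ³. If x₀ ∈ ℝ³ is a critical point of φ, i.e. rank Dφ(x₀) ≤ 1, then ∇(P̄∘φ)(x₀) = 0. -/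
open scoped BigOperators

/-- Cauchy–Green tensor `Cᵢⱼ = Σₐ ∂ᵢφₐ ∂ⱼφₐ` of a map `φ : ℝ³ → ℝ²`. -/
noncomputable def CG (φ : Fin 2 → (Fin 3 → ℝ) → ℝ) (i j : Fin 3) (x : Fin 3 → ℝ) : ℝ :=
  ∑ a : Fin 2, pd i (φ a) x * pd j (φ a) x

/-- `|Dφ|² = Σ_{a,i} (∂ᵢφₐ)²`. -/
noncomputable def eDen (φ : Fin 2 → (Fin 3 → ℝ) → ℝ) (x : Fin 3 → ℝ) : ℝ :=
  ∑ a : Fin 2, ∑ i : Fin 3, (pd i (φ a) x) ^ 2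

/-- σ₂-tension field `τ_{σ₂}(φ)ₐ = Σⱼ ∂ⱼ(|Dφ|² ∂ⱼφₐ − Σᵢ Cᵢⱼ ∂ᵢφₐ)`. -/
noncomputable def tau2 (φ : Fin 2 → (Fin 3 → ℝ) → ℝ) (a : Fin 2) (x : Fin 3 → ℝ) : ℝ :=
  ∑ j : Fin 3,
    pd j (fun y => eDen φ y * pd j (φ a) y - ∑ i : Fin 3, CG φ i j y * pd i (φ a) y) x

/-- Jacobian matrix `Dφ(x)` of `φ : ℝ³ → ℝ²`. -/
noncomputable def Jac (φ : Fin 2 → (Fin 3 → ℝ) → ℝ) (x : Fin 3 → ℝ) : Matrix (Fin 2) (Fin 3) ℝ :=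
  Matrix.of fun a j => pd j (φ a) x

/-- if the `C²` map `φ : ℝ³ → ℝ²` is σ₂-critical with `C¹` potential `P̄` and
`x₀` is a critical point of `φ` (`rank Dφ(x₀) ≤ 1`), then `x₀` is a critical point of the
Bernoulli function `P̄∘φ`: `∇(P̄∘φ)(x₀) = 0`. -/
theorem stmt8 (φ : Fin 2 → (Fin 3 → ℝ) → ℝ) (hφ : ∀ a, ContDiff ℝ 2 (φ a))
    (Pbar : (Fin 2 → ℝ) → ℝ) (hPbar : ContDiff ℝ 1 Pbar)
    (hcrit : ∀ (a : Fin 2) (x : Fin 3 → ℝ),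
      tau2 φ a x = fderiv ℝ Pbar (fun b => φ b x) (Pi.single a 1))
    (x₀ : Fin 3 → ℝ) (hrank : (Jac φ x₀).rank ≤ 1) :
    ∀ i, pd i (fun y => Pbar (fun b => φ b y)) x₀ = 0 := by
  classical
  intro i
  -- second-derivative continuous linear maps
  have hfd : ∀ a, Differentiable ℝ (fderiv ℝ (φ a)) := fun a =>
    ((hφ a).fderiv_right (m := 1) (by norm_num)).differentiable one_ne_zero
  set D : Fin 2 → Fin 3 → ((Fin 3 → ℝ) →L[ℝ] ℝ) := fun a k =>
    (ContinuousLinearMap.apply ℝ ℝ (Pi.single k (1:ℝ))).comp (fderiv ℝ (fderiv ℝ (φ a)) x₀)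
    with hDdef
  have hD : ∀ a k, HasFDerivAt (fun y => pd k (φ a) y) (D a k) x₀ := by
    intro a k
    exact (ContinuousLinearMap.apply ℝ ℝ (Pi.single k (1:ℝ))).hasFDerivAt.comp x₀
      (hfd a x₀).hasFDerivAt
  -- derivative of the energy density
  have hE : HasFDerivAt (fun y => eDen φ y)
      (∑ b : Fin 2, ∑ k : Fin 3, (pd k (φ b) x₀ • D b k + pd k (φ b) x₀ • D b k)) x₀ := by
    have heq : (fun y => eDen φ y)
        = fun y => ∑ b : Fin 2, ∑ k : Fin 3, pd k (φ b) y * pd k (φ b) y := by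
      funext y; simp [eDen, sq]
    rw [heq]
    exact HasFDerivAt.fun_sum fun b _ => HasFDerivAt.fun_sum fun k _ => (hD b k).mul (hD b k)
  -- derivative of the Cauchy–Green entries
  have hC : ∀ ii j, HasFDerivAt (fun y => CG φ ii j y)
      (∑ b : Fin 2, (pd ii (φ b) x₀ • D b j + pd j (φ b) x₀ • D b ii)) x₀ := by
    intro ii j
    have heq : (fun y => CG φ ii j y)
        = fun y => ∑ b : Fin 2, pd ii (φ b) y * pd j (φ b) y := by
      funext y; simp [CG]
    rw [heq]
    exact HasFDerivAt.fun_sum fun b _ => (hD b ii).mul (hD b j)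
  -- expansion of tau2 at x₀
  have htau : ∀ a, tau2 φ a x₀ = ∑ j : Fin 3,
      ((eDen φ x₀ • D a j + pd j (φ a) x₀ •
          (∑ b : Fin 2, ∑ k : Fin 3, (pd k (φ b) x₀ • D b k + pd k (φ b) x₀ • D b k)))
        - ∑ ii : Fin 3, (CG φ ii j x₀ • D a ii + pd ii (φ a) x₀ •
            (∑ b : Fin 2, (pd ii (φ b) x₀ • D b j + pd j (φ b) x₀ • D b ii))))
        (Pi.single j (1:ℝ)) := by
    intro a
    unfold tau2
    refine Finset.sum_congr rfl fun j _ => ?_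
    have h : HasFDerivAt
        (fun y => eDen φ y * pd j (φ a) y - ∑ ii : Fin 3, CG φ ii j y * pd ii (φ a) y)
        ((eDen φ x₀ • D a j + pd j (φ a) x₀ •
            (∑ b : Fin 2, ∑ k : Fin 3, (pd k (φ b) x₀ • D b k + pd k (φ b) x₀ • D b k)))
          - ∑ ii : Fin 3, (CG φ ii j x₀ • D a ii + pd ii (φ a) x₀ •
              (∑ b : Fin 2, (pd ii (φ b) x₀ • D b j + pd j (φ b) x₀ • D b ii)))) x₀ :=
      (hE.mul (hD a j)).sub (HasFDerivAt.fun_sum fun ii _ => (hC ii j).mul (hD a ii))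
    rw [pd, h.fderiv]
  -- chain rule: reduce the goal to an algebraic identity
  have hΦ : DifferentiableAt ℝ (fun y (b : Fin 2) => φ b y) x₀ :=
    differentiableAt_pi.mpr fun b => ((hφ b).differentiable two_ne_zero).differentiableAt
  have hP : DifferentiableAt ℝ Pbar (fun b => φ b x₀) :=
    (hPbar.differentiable one_ne_zero).differentiableAt
  have hcomp : pd i (fun y => Pbar (fun b => φ b y)) x₀
      = fderiv ℝ Pbar (fun b => φ b x₀) (fun b => pd i (φ b) x₀) := by
    rw [pd, show (fun y => Pbar (fun b => φ b y)) = Pbar ∘ (fun y (b : Fin 2) => φ b y) from rfl,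
      fderiv_comp x₀ hP hΦ]
    rw [ContinuousLinearMap.comp_apply]
    congr 1
    rw [fderiv_pi fun b => ((hφ b).differentiable two_ne_zero).differentiableAt]
    rfl
  have hv : (fun b => pd i (φ b) x₀)
      = pd i (φ 0) x₀ • (Pi.single (0:Fin 2) (1:ℝ) : Fin 2 → ℝ)
        + pd i (φ 1) x₀ • (Pi.single (1:Fin 2) (1:ℝ) : Fin 2 → ℝ) := by
    funext b; fin_cases b <;> simp
  have hgoal : pd i (fun y => Pbar (fun b => φ b y)) x₀
      = pd i (φ 0) x₀ * tau2 φ 0 x₀ + pd i (φ 1) x₀ * tau2 φ 1 x₀ := by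
    rw [hcomp, hv, map_add, map_smul, map_smul, ← hcrit 0 x₀, ← hcrit 1 x₀]
    simp [smul_eq_mul]
  rw [hgoal]
  -- extract linear dependence of the two gradient rows from the rank hypothesis
  have hdep : ¬ LinearIndependent ℝ (Jac φ x₀).row := by
    intro h
    have := h.rank_matrix
    simp [Fintype.card_fin] at this
    omega
  rw [Fintype.linearIndependent_iff] at hdep
  push_neg at hdep
  obtain ⟨g, hg0, b, hb⟩ := hdep
  have hrow : ∀ k, g 0 * pd k (φ 0) x₀ + g 1 * pd k (φ 1) x₀ = 0 := by
    intro k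
    have := congrFun hg0 k
    simpa [Fin.sum_univ_two, Jac, Matrix.row] using this
  -- two cases according to which coefficient is nonzero
  have hcases : (∀ k, pd k (φ 1) x₀ = (-(g 0) / g 1) * pd k (φ 0) x₀)
      ∨ (∀ k, pd k (φ 0) x₀ = (-(g 1) / g 0) * pd k (φ 1) x₀) := by
    by_cases hg1 : g 1 = 0
    · have hg00 : g 0 ≠ 0 := by
        fin_cases b
        · exact hb
        · exact absurd hg1 hb
      right
      intro k
      have := hrow k
      field_simp
      linarith [hrow k]
    · left
      intro k
      field_simp
      linarith [hrow k]
  -- finally, the algebraic identity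
  rcases hcases with h | h
  · rw [htau 0, htau 1]
    simp only [ContinuousLinearMap.sub_apply, ContinuousLinearMap.add_apply,
      ContinuousLinearMap.smul_apply, ContinuousLinearMap.sum_apply, Fin.sum_univ_two,
      Fin.sum_univ_three, smul_eq_mul, eDen, CG]
    simp only [h, sq]
    ring
  · rw [htau 0, htau 1]
    simp only [ContinuousLinearMap.sub_apply, ContinuousLinearMap.add_apply,
      ContinuousLinearMap.smul_apply, ContinuousLinearMap.sum_apply, Fin.sum_univ_two,
      Fin.sum_univ_three, smul_eq_mul, eDen, CG]
    simp only [h, sq]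
    ring
end

section
/- Fix an integer k ≥ 1. On ℝ⁴ set ρ₁(x) = x₁²+x₂², ρ₂(x) = x₃²+x₄², ξ(x) = (−x₂, x₁, −x₄, x₃), F(x) = k² (ρ₁(x) ρ₂(x))^{k−1} / (ρ₁(x)^k + ρ₂(x)^k)², and V(x) = F(x)·ξ(x). Then for every x ∈ ℝ⁴ \ {0}: (i) (DV)(x)(V(x)) = −F(x)²·x, which for |x| = 1 is orthogonal to the tangent space T_x S³, so the covariant derivative ∇_V V on the round sphere S³ vanishes; (ii) Σᵢ ∂ᵢVᵢ(x) = 0 and ⟨(DV)(x)(x), x⟩ = 0, so the tangential divergence of V on S³ vanishes. Hence V restricted to S³ is a steady incompressible Euler flow on the round S³ with zero pressure. -/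
open scoped BigOperators

/-- Partial derivative `∂ⱼ f` of a scalar function on `ℝ⁴`. -/
noncomputable def pd4 (j : Fin 4) (f : (Fin 4 → ℝ) → ℝ) (x : Fin 4 → ℝ) : ℝ :=
  fderiv ℝ f x (Pi.single j 1)

/-- `ρ₁(x) = x₁² + x₂²`. -/
def rho1 (x : Fin 4 → ℝ) : ℝ := (x 0) ^ 2 + (x 1) ^ 2

/-- `ρ₂(x) = x₃² + x₄²`. -/
def rho2 (x : Fin 4 → ℝ) : ℝ := (x 2) ^ 2 + (x 3) ^ 2

/-- The Hopf vector field `ξ(x) = (−x₂, x₁, −x₄, x₃)` on `ℝ⁴`. -/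
def xiH (x : Fin 4 → ℝ) : Fin 4 → ℝ := ![-(x 1), x 0, -(x 3), x 2]

/-- `F(x) = k² (ρ₁ρ₂)^{k−1} / (ρ₁^k + ρ₂^k)²`. -/
noncomputable def Fk (k : ℕ) (x : Fin 4 → ℝ) : ℝ :=
  (k : ℝ) ^ 2 * (rho1 x * rho2 x) ^ (k - 1) / (rho1 x ^ k + rho2 x ^ k) ^ 2

/-- `V = F·ξ`. -/
noncomputable def Vk (k : ℕ) (x : Fin 4 → ℝ) : Fin 4 → ℝ := fun i => Fk k x * xiH x i

open ContinuousLinearMap in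
lemma keyF (k : ℕ) (hk : 1 ≤ k) (x : Fin 4 → ℝ) (hx : x ≠ 0) :
    ∃ c1 c2 : ℝ, ∀ i v, fderiv ℝ (fun y => Vk k y i) x v =
      xiH x i * (c1 * (2 * x 0 * v 0 + 2 * x 1 * v 1)
        + c2 * (2 * x 2 * v 2 + 2 * x 3 * v 3))
      + Fk k x * xiH v i := by
  -- denominator positive
  have hsum : rho1 x + rho2 x > 0 := by
    rcases Function.ne_iff.mp hx with ⟨i, hi⟩
    have : x i ≠ 0 := hi
    fin_cases i <;> simp only [rho1, rho2] <;> positivity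
  have hden : rho1 x ^ k + rho2 x ^ k ≠ 0 := by
    have h1 : (0:ℝ) ≤ rho1 x := by simp only [rho1]; positivity
    have h2 : (0:ℝ) ≤ rho2 x := by simp only [rho2]; positivity
    rcases lt_or_ge 0 (rho1 x) with h | h
    · have := pow_pos h k
      positivity
    · have h1' : rho1 x = 0 := le_antisymm h h1
      have h2' : 0 < rho2 x := by linarith
      have := pow_pos h2' k
      have hz : rho1 x ^ k = 0 := by
        rw [h1']; exact zero_pow (by omega)
      rw [hz]; positivity
  -- derivatives of rho1, rho2
  set P0 : (Fin 4 → ℝ) →L[ℝ] ℝ := proj 0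
  set P1 : (Fin 4 → ℝ) →L[ℝ] ℝ := proj 1
  set P2 : (Fin 4 → ℝ) →L[ℝ] ℝ := proj 2
  set P3 : (Fin 4 → ℝ) →L[ℝ] ℝ := proj 3
  have hp0 : HasFDerivAt (fun y : Fin 4 → ℝ => y 0) P0 x := (proj 0 : (Fin 4 → ℝ) →L[ℝ] ℝ).hasFDerivAt
  have hp1 : HasFDerivAt (fun y : Fin 4 → ℝ => y 1) P1 x := (proj 1 : (Fin 4 → ℝ) →L[ℝ] ℝ).hasFDerivAt
  have hp2 : HasFDerivAt (fun y : Fin 4 → ℝ => y 2) P2 x := (proj 2 : (Fin 4 → ℝ) →L[ℝ] ℝ).hasFDerivAt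
  have hp3 : HasFDerivAt (fun y : Fin 4 → ℝ => y 3) P3 x := (proj 3 : (Fin 4 → ℝ) →L[ℝ] ℝ).hasFDerivAt
  set D1 : (Fin 4 → ℝ) →L[ℝ] ℝ := (2 * x 0) • P0 + (2 * x 1) • P1 with hD1
  set D2 : (Fin 4 → ℝ) →L[ℝ] ℝ := (2 * x 2) • P2 + (2 * x 3) • P3 with hD2
  have hr1 : HasFDerivAt rho1 D1 x := by
    have h := (hp0.mul hp0).add (hp1.mul hp1)
    have he : rho1 = fun y : Fin 4 → ℝ => y 0 * y 0 + y 1 * y 1 := by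
      funext y; simp [rho1]; ring
    rw [he]
    refine HasFDerivAt.congr_fderiv h ?_
    symm
    ext v
    simp [D1, P0, P1]
    ring
  have hr2 : HasFDerivAt rho2 D2 x := by
    have h := (hp2.mul hp2).add (hp3.mul hp3)
    have he : rho2 = fun y : Fin 4 → ℝ => y 2 * y 2 + y 3 * y 3 := by
      funext y; simp [rho2]; ring
    rw [he]
    refine HasFDerivAt.congr_fderiv h ?_
    symm
    ext v
    simp [D2, P2, P3]
    ring
  have hr : HasFDerivAt (fun y => (rho1 y, rho2 y)) (D1.prod D2) x := hr1.prodMk hr2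
  -- the scalar function h
  set h : ℝ × ℝ → ℝ := fun p => (k : ℝ) ^ 2 * (p.1 * p.2) ^ (k - 1) / (p.1 ^ k + p.2 ^ k) ^ 2 with hh
  have hdiff : DifferentiableAt ℝ h (rho1 x, rho2 x) := by
    have hnum : DifferentiableAt ℝ (fun p : ℝ × ℝ => (k : ℝ) ^ 2 * (p.1 * p.2) ^ (k - 1))
        (rho1 x, rho2 x) :=
      (differentiableAt_const _).mul ((differentiableAt_fst.mul differentiableAt_snd).pow _)
    have hdenom : DifferentiableAt ℝ (fun p : ℝ × ℝ => (p.1 ^ k + p.2 ^ k) ^ 2)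
        (rho1 x, rho2 x) :=
      ((differentiableAt_fst.pow k).add (differentiableAt_snd.pow k)).pow 2
    have : DifferentiableAt ℝ (fun p : ℝ × ℝ =>
        ((k : ℝ) ^ 2 * (p.1 * p.2) ^ (k - 1)) * ((p.1 ^ k + p.2 ^ k) ^ 2)⁻¹)
        (rho1 x, rho2 x) := hnum.mul (hdenom.inv (pow_ne_zero _ hden))
    have heq : h = fun p : ℝ × ℝ =>
        ((k : ℝ) ^ 2 * (p.1 * p.2) ^ (k - 1)) * ((p.1 ^ k + p.2 ^ k) ^ 2)⁻¹ := by
      funext p; simp only [hh, div_eq_mul_inv]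
    rw [heq]
    exact this
  set Dh := fderiv ℝ h (rho1 x, rho2 x) with hDh
  have hcomp : HasFDerivAt (Fk k) (Dh.comp (D1.prod D2)) x := by
    have := HasFDerivAt.comp x hdiff.hasFDerivAt hr
    exact this
  refine ⟨Dh (1, 0), Dh (0, 1), ?_⟩
  have hDhval : ∀ a b : ℝ, Dh (a, b) = a * Dh (1, 0) + b * Dh (0, 1) := by
    intro a b
    have : (a, b) = a • ((1:ℝ), (0:ℝ)) + b • ((0:ℝ), (1:ℝ)) := by
      simp [Prod.ext_iff]
    rw [this, map_add, map_smul, map_smul, smul_eq_mul, smul_eq_mul]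
  have hLval : ∀ v : Fin 4 → ℝ, (Dh.comp (D1.prod D2)) v =
      Dh (1, 0) * (2 * x 0 * v 0 + 2 * x 1 * v 1)
      + Dh (0, 1) * (2 * x 2 * v 2 + 2 * x 3 * v 3) := by
    intro v
    have : (Dh.comp (D1.prod D2)) v = Dh (D1 v, D2 v) := rfl
    rw [this, hDhval]
    simp [D1, D2, P0, P1, P2, P3]
    ring
  intro i v
  fin_cases i
  · show (fderiv ℝ (fun y => Vk k y 0) x) v =
      xiH x 0 * (Dh (1, 0) * (2 * x 0 * v 0 + 2 * x 1 * v 1)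
        + Dh (0, 1) * (2 * x 2 * v 2 + 2 * x 3 * v 3)) + Fk k x * xiH v 0
    have he : (fun y => Vk k y 0) = fun y => Fk k y * (-(y 1)) := by
      funext y; simp [Vk, xiH]
    rw [he]
    have hd : HasFDerivAt (fun y => Fk k y * (-(y 1)))
        (Fk k x • (-P1) + (-(x 1)) • (Dh.comp (D1.prod D2))) x := hcomp.mul hp1.neg
    rw [hd.fderiv]
    simp only [ContinuousLinearMap.add_apply, ContinuousLinearMap.smul_apply,
      ContinuousLinearMap.neg_apply, smul_eq_mul, hLval v]
    simp [P1, xiH]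
    ring
  · show (fderiv ℝ (fun y => Vk k y 1) x) v =
      xiH x 1 * (Dh (1, 0) * (2 * x 0 * v 0 + 2 * x 1 * v 1)
        + Dh (0, 1) * (2 * x 2 * v 2 + 2 * x 3 * v 3)) + Fk k x * xiH v 1
    have he : (fun y => Vk k y 1) = fun y => Fk k y * (y 0) := by
      funext y; simp [Vk, xiH]
    rw [he]
    have hd : HasFDerivAt (fun y => Fk k y * (y 0))
        (Fk k x • P0 + (x 0) • (Dh.comp (D1.prod D2))) x := hcomp.mul hp0
    rw [hd.fderiv]
    simp only [ContinuousLinearMap.add_apply, ContinuousLinearMap.smul_apply, smul_eq_mul, hLval v]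
    simp [P0, xiH]
    ring
  · show (fderiv ℝ (fun y => Vk k y 2) x) v =
      xiH x 2 * (Dh (1, 0) * (2 * x 0 * v 0 + 2 * x 1 * v 1)
        + Dh (0, 1) * (2 * x 2 * v 2 + 2 * x 3 * v 3)) + Fk k x * xiH v 2
    have he : (fun y => Vk k y 2) = fun y => Fk k y * (-(y 3)) := by
      funext y; simp [Vk, xiH]
    rw [he]
    have hd : HasFDerivAt (fun y => Fk k y * (-(y 3)))
        (Fk k x • (-P3) + (-(x 3)) • (Dh.comp (D1.prod D2))) x := hcomp.mul hp3.neg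
    rw [hd.fderiv]
    simp only [ContinuousLinearMap.add_apply, ContinuousLinearMap.smul_apply,
      ContinuousLinearMap.neg_apply, smul_eq_mul, hLval v]
    simp [P3, xiH]
    ring
  · show (fderiv ℝ (fun y => Vk k y 3) x) v =
      xiH x 3 * (Dh (1, 0) * (2 * x 0 * v 0 + 2 * x 1 * v 1)
        + Dh (0, 1) * (2 * x 2 * v 2 + 2 * x 3 * v 3)) + Fk k x * xiH v 3
    have he : (fun y => Vk k y 3) = fun y => Fk k y * (y 2) := by
      funext y; simp [Vk, xiH]
    rw [he]
    have hd : HasFDerivAt (fun y => Fk k y * (y 2))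
        (Fk k x • P2 + (x 2) • (Dh.comp (D1.prod D2))) x := hcomp.mul hp2
    rw [hd.fderiv]
    simp only [ContinuousLinearMap.add_apply, ContinuousLinearMap.smul_apply, smul_eq_mul, hLval v]
    simp [P2, xiH]
    ring


/-- for every integer `k ≥ 1` and every `x ∈ ℝ⁴ \ {0}`:
(i) `(DV)(x)(V(x)) = −F(x)²·x`, which on the unit sphere is orthogonal to the tangent space
`T_xS³` (so the covariant derivative `∇_V V` on the round `S³` vanishes);
(ii) `Σᵢ ∂ᵢVᵢ(x) = 0` and `⟨(DV)(x)(x), x⟩ = 0` (so the tangential divergence of `V` on `S³`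
vanishes). Hence `V|_{S³}` is a steady incompressible Euler flow on `S³` with zero pressure. -/
theorem stmt13 (k : ℕ) (hk : 1 ≤ k) :
    ∀ x : Fin 4 → ℝ, x ≠ 0 →
      (∀ i, fderiv ℝ (fun y => Vk k y i) x (Vk k x) = -(Fk k x) ^ 2 * x i) ∧
      ((∑ i, pd4 i (fun y => Vk k y i) x) = 0) ∧
      ((∑ i, fderiv ℝ (fun y => Vk k y i) x x * x i) = 0) ∧
      ((∑ i, (x i) ^ 2) = 1 →
        ∀ u : Fin 4 → ℝ, (∑ i, u i * x i) = 0 →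
          (∑ i, fderiv ℝ (fun y => Vk k y i) x (Vk k x) * u i) = 0) := by
  intro x hx
  obtain ⟨c1, c2, hf⟩ := keyF k hk x hx
  have hA : ∀ i, fderiv ℝ (fun y => Vk k y i) x (Vk k x) = -(Fk k x) ^ 2 * x i := by
    intro i
    rw [hf i (Vk k x)]
    fin_cases i <;> simp [Vk, xiH] <;> ring
  refine ⟨hA, ?_, ?_, ?_⟩
  · simp only [pd4, Fin.sum_univ_four]
    rw [hf 0 _, hf 1 _, hf 2 _, hf 3 _]
    simp [xiH, Pi.single_apply]
    ring
  · simp only [Fin.sum_univ_four]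
    rw [hf 0 x, hf 1 x, hf 2 x, hf 3 x]
    simp only [xiH, Matrix.cons_val_zero, Matrix.cons_val_one, Matrix.head_cons,
      Matrix.cons_val_two, Matrix.tail_cons, Matrix.cons_val_three]
    ring
  · intro _ u hu
    simp only [Fin.sum_univ_four] at hu ⊢
    rw [hA 0, hA 1, hA 2, hA 3]
    linear_combination (-(Fk k x) ^ 2) * hu
end

section
/- Fix an integer k with |k| ≥ 1, and define h(t) = 1 + k^{−2} − 2k^{−2} t for t ∈ [0,1] and α(s) = arccos(2(1+k^{−2})cos²s − 2k^{−2}cos⁴s − 1) for s ∈ [0, π/2]. Then α(0) = 0, α(π/2) = π, α is differentiable on (0, π/2), and for every s ∈ (0, π/2) both equations hold: α′(s) sin α(s) = 2 sin(2s) h(cos²s) and α′(s) sin α(s) = −k² sin(2s) h(cos²s) h′(cos²s). -/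
open scoped Real
open Set

/-- for an integer `k` with `|k| ≥ 1`, with `h(t) = 1 + k⁻² − 2k⁻²t` and
`α(s) = arccos(2(1+k⁻²)cos²s − 2k⁻²cos⁴s − 1)`, one has `α(0) = 0`, `α(π/2) = π`, `α` is
differentiable on `(0, π/2)`, and on `(0, π/2)` both profile equations hold:
`α′(s) sin α(s) = 2 sin(2s) h(cos²s)` and `α′(s) sin α(s) = −k² sin(2s) h(cos²s) h′(cos²s)`. -/
theorem stmt14 (k : ℤ) (hk : 1 ≤ |k|)
    (h : ℝ → ℝ) (hh : h = fun t => 1 + ((k : ℝ) ^ 2)⁻¹ - 2 * ((k : ℝ) ^ 2)⁻¹ * t)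
    (α : ℝ → ℝ)
    (hα : α = fun s => Real.arccos
      (2 * (1 + ((k : ℝ) ^ 2)⁻¹) * Real.cos s ^ 2
        - 2 * ((k : ℝ) ^ 2)⁻¹ * Real.cos s ^ 4 - 1)) :
    α 0 = 0 ∧ α (π / 2) = π ∧
    (∀ s ∈ Ioo 0 (π / 2), DifferentiableAt ℝ α s) ∧
    (∀ s ∈ Ioo 0 (π / 2),
      deriv α s * Real.sin (α s) = 2 * Real.sin (2 * s) * h (Real.cos s ^ 2) ∧
      deriv α s * Real.sin (α s)
        = -(k : ℝ) ^ 2 * Real.sin (2 * s) * h (Real.cos s ^ 2)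
            * deriv h (Real.cos s ^ 2)) := by
  set c : ℝ := ((k : ℝ) ^ 2)⁻¹ with hc
  have hk1 : (1 : ℝ) ≤ |(k : ℝ)| := by exact_mod_cast hk
  have hk2 : (1 : ℝ) ≤ (k : ℝ) ^ 2 := by
    have := sq_abs (k : ℝ)
    nlinarith
  have hcpos : 0 < c := by positivity
  have hcle : c ≤ 1 := by
    rw [hc]
    exact inv_le_one_of_one_le₀ hk2
  have hck : c * (k : ℝ) ^ 2 = 1 := by
    rw [hc]; exact inv_mul_cancel₀ (ne_of_gt (by linarith))
  -- the inner function
  set g : ℝ → ℝ := fun s => 2 * (1 + c) * Real.cos s ^ 2 - 2 * c * Real.cos s ^ 4 - 1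
    with hg
  have hαg : α = fun s => Real.arccos (g s) := by rw [hα, hg]
  have h0 : α 0 = 0 := by
    have hg0 : g 0 = 1 := by rw [hg]; simp; ring
    rw [hαg]; simp only [hg0, Real.arccos_one]
  have hpi : α (π / 2) = π := by
    rw [hαg]; simp [hg]
  -- bounds on g in the open interval
  have key : ∀ s ∈ Ioo 0 (π / 2), -1 < g s ∧ g s < 1 := by
    intro s hs
    obtain ⟨hs0, hs1⟩ := hs
    have hcos0 : 0 < Real.cos s := Real.cos_pos_of_mem_Ioo ⟨by linarith [Real.pi_pos], hs1⟩
    have hsin0 : 0 < Real.sin s := Real.sin_pos_of_pos_of_lt_pi hs0 (by linarith [Real.pi_pos])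
    have hcos1 : Real.cos s < 1 := by
      nlinarith [Real.sin_sq_add_cos_sq s]
    set u : ℝ := Real.cos s ^ 2 with hu
    have hu0 : 0 < u := by positivity
    have hu1 : u < 1 := by nlinarith
    have hcu : c * u < 1 := by nlinarith
    constructor
    · have he : g s + 1 = 2 * u * (1 + c - c * u) := by rw [hg]; simp only [← hu]; ring
      nlinarith [mul_pos hu0 (show (0:ℝ) < 1 + c - c * u by nlinarith)]
    · have he : 1 - g s = 2 * (1 - u) * (1 - c * u) := by rw [hg]; simp only [← hu]; ring
      nlinarith [mul_pos (show (0:ℝ) < 1 - u by linarith) (show (0:ℝ) < 1 - c * u by linarith)]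
  -- derivative facts
  have deriv_data : ∀ s ∈ Ioo 0 (π / 2),
      HasDerivAt α ((-(1 / Real.sqrt (1 - g s ^ 2))) *
        (2 * (1 + c) * (2 * Real.cos s ^ 1 * (-Real.sin s))
          - 2 * c * (4 * Real.cos s ^ 3 * (-Real.sin s)))) s := by
    intro s hs
    obtain ⟨hgl, hgu⟩ := key s hs
    have hgder : HasDerivAt g
        (2 * (1 + c) * (2 * Real.cos s ^ 1 * (-Real.sin s))
          - 2 * c * (4 * Real.cos s ^ 3 * (-Real.sin s))) s := by
      have hcos := Real.hasDerivAt_cos s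
      have h2 : HasDerivAt (fun x => Real.cos x ^ 2) (2 * Real.cos s ^ 1 * (-Real.sin s)) s :=
        hcos.pow 2
      have h4 : HasDerivAt (fun x => Real.cos x ^ 4) (4 * Real.cos s ^ 3 * (-Real.sin s)) s :=
        hcos.pow 4
      simpa [hg] using (((h2.const_mul (2 * (1 + c))).sub (h4.const_mul (2 * c))).sub_const 1)
    have harc := Real.hasDerivAt_arccos (ne_of_gt hgl) (ne_of_lt hgu)
    rw [hαg]
    exact harc.comp s hgder
  have hdiff : ∀ s ∈ Ioo 0 (π / 2), DifferentiableAt ℝ α s :=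
    fun s hs => (deriv_data s hs).differentiableAt
  refine ⟨h0, hpi, hdiff, ?_⟩
  intro s hs
  have hd := deriv_data s hs
  obtain ⟨hgl, hgu⟩ := key s hs
  have hsq : 0 < 1 - g s ^ 2 := by nlinarith
  have hsqrt : 0 < Real.sqrt (1 - g s ^ 2) := Real.sqrt_pos.mpr hsq
  have hsinα : Real.sin (α s) = Real.sqrt (1 - g s ^ 2) := by
    rw [hαg]; exact Real.sin_arccos _
  have hderiv : deriv α s = (-(1 / Real.sqrt (1 - g s ^ 2))) *
      (2 * (1 + c) * (2 * Real.cos s ^ 1 * (-Real.sin s))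
        - 2 * c * (4 * Real.cos s ^ 3 * (-Real.sin s))) := hd.deriv
  have main : deriv α s * Real.sin (α s)
      = -(2 * (1 + c) * (2 * Real.cos s ^ 1 * (-Real.sin s))
          - 2 * c * (4 * Real.cos s ^ 3 * (-Real.sin s))) := by
    rw [hderiv, hsinα]
    field_simp
  have hhval : h (Real.cos s ^ 2) = 1 + c - 2 * c * Real.cos s ^ 2 := by
    rw [hh]
  have hhderiv : deriv h (Real.cos s ^ 2) = -(2 * c) := by
    rw [hh]
    have : HasDerivAt (fun t : ℝ => 1 + c - 2 * c * t) (-(2 * c)) (Real.cos s ^ 2) := by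
      simpa using ((hasDerivAt_id (Real.cos s ^ 2)).const_mul (2 * c)).const_sub (1 + c)
    exact this.deriv
  have hsin2 : Real.sin (2 * s) = 2 * Real.sin s * Real.cos s := Real.sin_two_mul s
  constructor
  · rw [main, hsin2, hhval]; ring
  · rw [main, hsin2, hhval, hhderiv]
    linear_combination (-4 * Real.sin s * Real.cos s * (1 + c - 2 * c * Real.cos s ^ 2)) * hck
end
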